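/- arXiv:2412.10616 — 2 statements merged into one kernel-verified Lean document; each statement's English description precedes it below -/
import Mathlib

section
/- Let A be a d×d real symmetric positive semidefinite matrix, γ > 0, V > 0, and T > 0. Define Ã = A + (V²/γ)·I with eigenvalues λ₁,…,λ_d. If d_hyb is the number of indices i with λ_i ≤ 4T/γ, then Σ_{i=1}^d log(1 + (4T/γ)/λ_i) ≤ d_hyb · log(1 + 4T/V²) + d · log(2). -/
open Matrix

/-- Key step bounding the hybrid SEC by the number of poorly covered
directions: eigenvalues of `Ã = A + (V²/γ)·I` satisfy
`Σᵢ log(1 + (4T/γ)/λᵢ) ≤ d_hyb·log(1 + 4T/V²) + d·log 2`, where `d_hyb`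
counts the eigenvalues at most `4T/γ`. -/
theorem hybrid_sec_eigenvalue_bound {d : ℕ} (A : Matrix (Fin d) (Fin d) ℝ)
    (hA : A.PosSemidef) (γ V T : ℝ) (hγ : 0 < γ) (hV : 0 < V) (hT : 0 < T)
    (Atil : Matrix (Fin d) (Fin d) ℝ)
    (hAtil : Atil = A + (V ^ 2 / γ) • (1 : Matrix (Fin d) (Fin d) ℝ))
    (hH : Atil.IsHermitian)
    (dhyb : ℕ)
    (hdhyb : dhyb = (Finset.univ.filter
      (fun i => hH.eigenvalues i ≤ 4 * T / γ)).card) :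
    ∑ i, Real.log (1 + (4 * T / γ) / hH.eigenvalues i)
      ≤ dhyb * Real.log (1 + 4 * T / V ^ 2) + d * Real.log 2 := by
  set c : ℝ := V ^ 2 / γ with hc
  have hcpos : 0 < c := div_pos (pow_pos hV 2) hγ
  -- eigenvalue lower bound
  have hlow : ∀ i, c ≤ hH.eigenvalues i := by
    intro i
    set v : Fin d → ℝ := ⇑(hH.eigenvectorBasis i) with hv
    have hmul : Atil *ᵥ v = hH.eigenvalues i • v := hH.mulVec_eigenvectorBasis i
    have hnorm : v ⬝ᵥ v = 1 := by
      have h1 : ‖hH.eigenvectorBasis i‖ = 1 := hH.eigenvectorBasis.orthonormal.1 i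
      have h2 : (inner ℝ (hH.eigenvectorBasis i) (hH.eigenvectorBasis i) : ℝ) = 1 := by
        rw [real_inner_self_eq_norm_sq, h1]; norm_num
      rw [← h2]
      rw [EuclideanSpace.inner_eq_star_dotProduct, star_trivial]
    have hAv : A *ᵥ v = (hH.eigenvalues i - c) • v := by
      have : A = Atil - c • (1 : Matrix (Fin d) (Fin d) ℝ) := by
        rw [hAtil]; abel
      rw [this, sub_mulVec, hmul, smul_mulVec, one_mulVec, sub_smul]
    have := hA.dotProduct_mulVec_nonneg v
    rw [hAv] at this
    have hsv : star v ⬝ᵥ ((hH.eigenvalues i - c) • v) = hH.eigenvalues i - c := by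
      rw [dotProduct_smul]
      simp [hnorm, star_trivial]
    rw [hsv] at this
    linarith
  have hlogpos : ∀ i, 0 < hH.eigenvalues i := fun i => lt_of_lt_of_le hcpos (hlow i)
  -- per-index bound
  have key : ∀ i, Real.log (1 + (4 * T / γ) / hH.eigenvalues i)
      ≤ (if hH.eigenvalues i ≤ 4 * T / γ then Real.log (1 + 4 * T / V ^ 2) else 0)
        + Real.log 2 := by
    intro i
    by_cases h : hH.eigenvalues i ≤ 4 * T / γ
    · rw [if_pos h]
      have h1 : (4 * T / γ) / hH.eigenvalues i ≤ 4 * T / V ^ 2 := by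
        rw [div_le_div_iff₀ (hlogpos i) (pow_pos hV 2)]
        calc 4 * T / γ * V ^ 2 = (V ^ 2 / γ) * (4 * T) := by ring
          _ ≤ hH.eigenvalues i * (4 * T) := by
              apply mul_le_mul_of_nonneg_right (hlow i); positivity
          _ = 4 * T * hH.eigenvalues i := mul_comm _ _
      have h2 : Real.log (1 + (4 * T / γ) / hH.eigenvalues i)
          ≤ Real.log (1 + 4 * T / V ^ 2) := by
        have := hlogpos i
        apply Real.log_le_log (by positivity) (by linarith)
      have h3 : (0:ℝ) ≤ Real.log 2 := Real.log_nonneg (by norm_num)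
      linarith
    · rw [if_neg h]
      push_neg at h
      have h1 : (4 * T / γ) / hH.eigenvalues i ≤ 1 := by
        rw [div_le_one (hlogpos i)]; linarith
      have h2 : Real.log (1 + (4 * T / γ) / hH.eigenvalues i) ≤ Real.log 2 := by
        have := hlogpos i
        apply Real.log_le_log (by positivity) (by linarith)
      linarith
  calc ∑ i, Real.log (1 + (4 * T / γ) / hH.eigenvalues i)
      ≤ ∑ i, ((if hH.eigenvalues i ≤ 4 * T / γ then Real.log (1 + 4 * T / V ^ 2) else 0)
        + Real.log 2) := Finset.sum_le_sum (fun i _ => key i)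
    _ = dhyb * Real.log (1 + 4 * T / V ^ 2) + d * Real.log 2 := by
        rw [Finset.sum_add_distrib, Finset.sum_ite, Finset.sum_const, Finset.sum_const_zero,
          add_zero, Finset.sum_const, Finset.card_univ, Fintype.card_fin, hdhyb,
          nsmul_eq_mul, nsmul_eq_mul]
end

section
/- Let B > 0 and let p = σ(x), q = σ(y) for x, y ∈ [-B, B]. Then the binary KL divergence satisfies p·log(p/q) + (1-p)·log((1-p)/(1-q)) ≥ (e^{-2B}/8)·(x-y)² — in particular squared log-odds differences are controlled by binary KL divergence on a bounded range. -/
noncomputable def sigmoid (x : ℝ) : ℝ := 1 / (1 + Real.exp (-x))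

lemma one_add_exp_pos (t : ℝ) : 0 < 1 + Real.exp (-t) := by positivity

lemma sigmoid_pos (t : ℝ) : 0 < sigmoid t := by unfold sigmoid; positivity

lemma one_sub_sigmoid (t : ℝ) :
    1 - sigmoid t = Real.exp (-t) / (1 + Real.exp (-t)) := by
  unfold sigmoid
  field_simp
  ring

lemma one_sub_sigmoid_pos (t : ℝ) : 0 < 1 - sigmoid t := by
  rw [one_sub_sigmoid]; positivity

lemma log_one_add_exp_neg (t : ℝ) :
    Real.log (1 + Real.exp (-t)) = Real.log (1 + Real.exp t) - t := by
  have h : 1 + Real.exp (-t) = (1 + Real.exp t) * Real.exp (-t) := by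
    rw [Real.exp_neg]
    field_simp
    ring
  rw [h, Real.log_mul (by positivity) (Real.exp_ne_zero _), Real.log_exp]
  ring

lemma log_sigmoid (t : ℝ) :
    Real.log (sigmoid t) = t - Real.log (1 + Real.exp t) := by
  unfold sigmoid
  rw [Real.log_div one_ne_zero (ne_of_gt (one_add_exp_pos t)), Real.log_one,
    log_one_add_exp_neg]
  ring

lemma log_one_sub_sigmoid (t : ℝ) :
    Real.log (1 - sigmoid t) = - Real.log (1 + Real.exp t) := by
  rw [one_sub_sigmoid,
    Real.log_div (Real.exp_ne_zero _) (ne_of_gt (one_add_exp_pos t)),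
    Real.log_exp, log_one_add_exp_neg]
  ring

/-- The KL divergence equals the Bregman divergence of `φ(t) = log(1+eᵗ)`. -/
lemma kl_eq (x y : ℝ) :
    sigmoid x * Real.log (sigmoid x / sigmoid y)
      + (1 - sigmoid x) * Real.log ((1 - sigmoid x) / (1 - sigmoid y))
    = (Real.log (1 + Real.exp y) - Real.log (1 + Real.exp x))
        - sigmoid x * (y - x) - (1 - sigmoid x) * 0 := by
  rw [Real.log_div (ne_of_gt (sigmoid_pos x)) (ne_of_gt (sigmoid_pos y)),
    Real.log_div (ne_of_gt (one_sub_sigmoid_pos x)) (ne_of_gt (one_sub_sigmoid_pos y)),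
    log_sigmoid, log_sigmoid, log_one_sub_sigmoid, log_one_sub_sigmoid]
  ring

lemma hasDerivAt_phi (t : ℝ) :
    HasDerivAt (fun s : ℝ => Real.log (1 + Real.exp s)) (sigmoid t) t := by
  have h1 : HasDerivAt (fun s : ℝ => 1 + Real.exp s) (Real.exp t) t := by
    simpa using (Real.hasDerivAt_exp t).const_add 1
  have h2 := h1.log (by positivity)
  convert h2 using 1
  unfold sigmoid
  rw [Real.exp_neg]
  have h := Real.exp_pos t
  field_simp
  ring

lemma hasDerivAt_sigmoid (t : ℝ) :
    HasDerivAt sigmoid (Real.exp (-t) / (1 + Real.exp (-t)) ^ 2) t := by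
  have h1 : HasDerivAt (fun s : ℝ => 1 + Real.exp (-s)) (-Real.exp (-t)) t := by
    have := ((hasDerivAt_id t).neg).exp
    simpa using this.const_add 1
  have h2 := h1.inv (ne_of_gt (one_add_exp_pos t))
  have : sigmoid = fun s : ℝ => ((1 : ℝ) + Real.exp (-s))⁻¹ := by
    funext s; simp [sigmoid, one_div]
  rw [this]
  exact h2.congr_deriv (by ring)

lemma sigmoid_deriv_lb {B t : ℝ} (hB : 0 < B) (h1 : -B ≤ t) (h2 : t ≤ B) :
    Real.exp (-2 * B) / 4 ≤ Real.exp (-t) / (1 + Real.exp (-t)) ^ 2 := by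
  have hu1 : Real.exp (-t) ≤ Real.exp B := Real.exp_le_exp.2 (by linarith)
  have hu2 : Real.exp (-B) ≤ Real.exp (-t) := Real.exp_le_exp.2 (by linarith)
  have hup : 0 < Real.exp (-t) := Real.exp_pos _
  have hEp : 0 < Real.exp (-2 * B) := Real.exp_pos _
  have hBp : 0 < Real.exp (-B) := Real.exp_pos _
  have e2 : Real.exp (-2 * B) * Real.exp B = Real.exp (-B) := by
    rw [← Real.exp_add]; congr 1; ring
  have e3 : Real.exp (-B) * Real.exp (-B) = Real.exp (-2 * B) := by
    rw [← Real.exp_add]; congr 1; ring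
  have hB1 : Real.exp (-B) ≤ 1 := by
    calc Real.exp (-B) ≤ Real.exp 0 := Real.exp_le_exp.2 (by linarith)
    _ = 1 := Real.exp_zero
  have hE1 : Real.exp (-2 * B) ≤ 1 := by
    calc Real.exp (-2 * B) ≤ Real.exp 0 := Real.exp_le_exp.2 (by linarith)
    _ = 1 := Real.exp_zero
  have A1 : Real.exp (-2 * B) * Real.exp (-t) * Real.exp (-t) ≤ Real.exp (-t) := by
    calc Real.exp (-2 * B) * Real.exp (-t) * Real.exp (-t)
        ≤ Real.exp (-2 * B) * Real.exp B * Real.exp (-t) :=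
          mul_le_mul_of_nonneg_right (mul_le_mul_of_nonneg_left hu1 hEp.le) hup.le
      _ = Real.exp (-B) * Real.exp (-t) := by rw [e2]
      _ ≤ 1 * Real.exp (-t) := mul_le_mul_of_nonneg_right hB1 hup.le
      _ = Real.exp (-t) := one_mul _
  have A2 : Real.exp (-2 * B) ≤ Real.exp (-t) := by
    calc Real.exp (-2 * B) = Real.exp (-B) * Real.exp (-B) := e3.symm
      _ ≤ 1 * Real.exp (-t) := mul_le_mul hB1 hu2 hBp.le zero_le_one
      _ = Real.exp (-t) := one_mul _
  have A3 : Real.exp (-2 * B) * Real.exp (-t) ≤ Real.exp (-t) := by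
    calc Real.exp (-2 * B) * Real.exp (-t) ≤ 1 * Real.exp (-t) :=
          mul_le_mul_of_nonneg_right hE1 hup.le
      _ = Real.exp (-t) := one_mul _
  rw [div_le_div_iff₀ (by norm_num) (by positivity)]
  nlinarith [A1, A2, A3]

/-- Binary KL divergence between `σ(x)` and `σ(y)` controls the squared
log-odds difference on a bounded range. -/
theorem binary_kl_ge_sq_logodds (B x y : ℝ) (hB : 0 < B)
    (hx : x ∈ Set.Icc (-B) B) (hy : y ∈ Set.Icc (-B) B) :
    Real.exp (-2 * B) / 8 * (x - y) ^ 2 ≤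
      sigmoid x * Real.log (sigmoid x / sigmoid y)
        + (1 - sigmoid x) * Real.log ((1 - sigmoid x) / (1 - sigmoid y)) := by
  obtain ⟨hx1, hx2⟩ := hx
  obtain ⟨hy1, hy2⟩ := hy
  set m : ℝ := Real.exp (-2 * B) / 4 with hm
  set p : ℝ := sigmoid x with hp
  -- H is the derivative of the Bregman gap comparison function
  set H : ℝ → ℝ := fun t => sigmoid t - m * t with hH
  have hHderiv : ∀ t : ℝ,
      HasDerivAt H (Real.exp (-t) / (1 + Real.exp (-t)) ^ 2 - m) t := by
    intro t
    exact (hasDerivAt_sigmoid t).sub (((hasDerivAt_id t).const_mul m).congr_deriv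
      (by simp))
  have hHmono : MonotoneOn H (Set.Icc (-B) B) := by
    apply monotoneOn_of_deriv_nonneg (convex_Icc _ _)
    · exact fun t _ => ((hHderiv t).differentiableAt).continuousAt.continuousWithinAt
    · intro t _
      exact ((hHderiv t).differentiableAt).differentiableWithinAt
    · intro t ht
      rw [interior_Icc] at ht
      rw [(hHderiv t).deriv]
      have := sigmoid_deriv_lb hB ht.1.le ht.2.le
      linarith
  -- The Bregman gap function
  set G : ℝ → ℝ := fun t => Real.log (1 + Real.exp t) - Real.log (1 + Real.exp x)
      - p * (t - x) - m / 2 * (t - x) ^ 2 with hG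
  have hGderiv : ∀ t : ℝ, HasDerivAt G (H t - H x) t := by
    intro t
    have h1 := hasDerivAt_phi t
    have h2 : HasDerivAt (fun s : ℝ => p * (s - x)) p t := by
      simpa using ((hasDerivAt_id t).sub_const x).const_mul p
    have h3 : HasDerivAt (fun s : ℝ => m / 2 * (s - x) ^ 2) (m * (t - x)) t := by
      have h := (((hasDerivAt_id t).sub_const x).pow 2).const_mul (m / 2)
      simp only [id_eq, Nat.cast_ofNat, pow_one, mul_one, Pi.pow_apply, Nat.reduceSub] at h
      exact h.congr_deriv (by ring)
    have := ((h1.sub_const (Real.log (1 + Real.exp x))).sub h2).sub h3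
    refine this.congr_deriv ?_
    simp only [H, hp]
    ring
  have hGx : G x = 0 := by simp [hG]
  have key : 0 ≤ G y := by
    rcases le_total x y with hxy | hxy
    · have hmono : MonotoneOn G (Set.Icc x B) := by
        apply monotoneOn_of_deriv_nonneg (convex_Icc _ _)
        · exact fun t _ => ((hGderiv t).differentiableAt).continuousAt.continuousWithinAt
        · intro t _
          exact ((hGderiv t).differentiableAt).differentiableWithinAt
        · intro t ht
          rw [interior_Icc] at ht
          rw [(hGderiv t).deriv]
          have := hHmono ⟨hx1, hx2⟩ ⟨by linarith [ht.1], ht.2.le⟩ ht.1.le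
          linarith
      have := hmono ⟨le_refl x, hx2⟩ ⟨hxy, hy2⟩ hxy
      rw [hGx] at this
      exact this
    · have hanti : AntitoneOn G (Set.Icc (-B) x) := by
        apply antitoneOn_of_deriv_nonpos (convex_Icc _ _)
        · exact fun t _ => ((hGderiv t).differentiableAt).continuousAt.continuousWithinAt
        · intro t _
          exact ((hGderiv t).differentiableAt).differentiableWithinAt
        · intro t ht
          rw [interior_Icc] at ht
          rw [(hGderiv t).deriv]
          have := hHmono ⟨ht.1.le, by linarith [ht.2]⟩ ⟨hx1, hx2⟩ ht.2.le
          linarith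
      have := hanti ⟨hy1, hxy⟩ ⟨hx1, le_refl x⟩ hxy
      rw [hGx] at this
      exact this
  rw [kl_eq]
  have hGy : G y = Real.log (1 + Real.exp y) - Real.log (1 + Real.exp x)
      - p * (y - x) - m / 2 * (y - x) ^ 2 := rfl
  rw [hp] at hGy
  have hsq : (x - y) ^ 2 = (y - x) ^ 2 := by ring
  rw [hsq]
  have heq : Real.exp (-2 * B) / 8 = m / 2 := by rw [hm]; ring
  rw [heq, mul_zero, sub_zero]
  rw [hGy] at key
  linarith [key]
end
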